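/- arXiv:2211.16722 — 3 statements merged into one kernel-verified Lean document; each statement's English description precedes it below -/
import Mathlib

section
/- Let p ∈ ℕ with p ≥ 1 and ε₀ ∈ (0,1) with b := 1−(1−ε₀)p ≥ 0. For t > 1 define I_p(t) := (1 − t^{1−p})/(p−1) if p ≥ 2 and I_1(t) := ln t if p = 1. Let A ∈ ℝ satisfy: A > 2/p in case b > 0, and A > (p−1)·2^p/((2^{p−1}−1)·p) in case b = 0. Then for every K ≥ 0 there exists δ₀ ∈ (0,1) such that for all δ ∈ (0,δ₀): 1 − (p/2)·A·δ^{−b}·I_p(1 + δ^{b}) + K·δ^{(1−ε₀)p} < 0. -/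
open Filter Set

lemma aux_small (M r ε : ℝ) (hr : 0 < r) (hε : 0 < ε) :
    ∀ᶠ δ in nhdsWithin 0 (Set.Ioi (0:ℝ)), M * δ ^ r < ε := by
  have hc : Filter.Tendsto (fun δ : ℝ => M * δ ^ r) (nhdsWithin 0 (Set.Ioi 0)) (nhds 0) := by
    have h1 : ContinuousAt (fun δ : ℝ => δ ^ r) 0 :=
      Real.continuousAt_rpow_const 0 r (Or.inr hr.le)
    have h2 : Filter.Tendsto (fun δ : ℝ => δ ^ r) (nhdsWithin 0 (Set.Ioi 0)) (nhds 0) := by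
      have := h1.tendsto
      rw [Real.zero_rpow hr.ne'] at this
      exact this.mono_left nhdsWithin_le_nhds
    simpa using h2.const_mul M
  exact hc.eventually_lt_const hε

lemma aux_package {P : ℝ → Prop} (h : ∀ᶠ δ in nhdsWithin 0 (Set.Ioi (0:ℝ)), P δ) :
    ∃ δ₀ ∈ Set.Ioo (0:ℝ) 1, ∀ δ ∈ Set.Ioo (0:ℝ) δ₀, P δ := by
  rw [Filter.eventually_iff, mem_nhdsGT_iff_exists_Ioo_subset] at h
  obtain ⟨u, hu, hsub⟩ := h
  refine ⟨min u (1/2), ⟨lt_min hu (by norm_num), lt_of_le_of_lt (min_le_right _ _) (by norm_num)⟩,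
    fun δ hδ => hsub ⟨hδ.1, lt_of_lt_of_le hδ.2 (min_le_left _ _)⟩⟩

lemma key_bound (p : ℕ) (hp : 1 ≤ p) (x : ℝ) (hx0 : 0 < x) :
    x * (1 - (p:ℝ) * x) ≤
      (if p = 1 then Real.log (1 + x)
       else (1 - (1 + x) ^ ((1 : ℝ) - (p : ℝ))) / ((p : ℝ) - 1)) := by
  have hppos : (0:ℝ) < p := by exact_mod_cast Nat.pos_of_ne_zero (by omega)
  split_ifs with hp1
  · have hlog : 1 - (1 + x)⁻¹ ≤ Real.log (1 + x) := by
      have h := Real.log_le_sub_one_of_pos (show (0:ℝ) < (1+x)⁻¹ by positivity)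
      rw [Real.log_inv] at h
      linarith
    have h2 : x * (1 - (p:ℝ) * x) * (1 + x) ≤ x := by
      rw [hp1]; push_cast; nlinarith [sq_nonneg x]
    have h3 : x * (1 - (p:ℝ) * x) ≤ x / (1 + x) :=
      (le_div_iff₀ (by linarith)).mpr h2
    have h4 : x / (1 + x) = 1 - (1 + x)⁻¹ := by field_simp; ring
    linarith
  · have hp2 : 2 ≤ p := by omega
    have hpR : (2:ℝ) ≤ (p:ℝ) := by exact_mod_cast hp2
    have hpm1 : ((p - 1 : ℕ) : ℝ) = (p:ℝ) - 1 := by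
      push_cast [Nat.cast_sub hp]; ring
    have hy0 : (0:ℝ) < (1 + x) ^ (p - 1) := by positivity
    have hrpow : (1 + x) ^ ((1:ℝ) - (p:ℝ)) = ((1 + x) ^ (p - 1))⁻¹ := by
      rw [show (1:ℝ) - (p:ℝ) = -(((p-1:ℕ):ℝ)) by rw [hpm1]; ring,
        Real.rpow_neg (by linarith), Real.rpow_natCast]
    have hber : 1 + ((p:ℝ) - 1) * x ≤ (1 + x) ^ (p - 1) := by
      have := one_add_mul_le_pow (show (-2:ℝ) ≤ x by linarith) (p - 1)
      rwa [hpm1] at this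
    have ht0 : (0:ℝ) < 1 + ((p:ℝ) - 1) * x := by nlinarith
    have hyinv : ((1 + x) ^ (p - 1))⁻¹ ≤ (1 + ((p:ℝ) - 1) * x)⁻¹ :=
      inv_anti₀ ht0 hber
    have hkey : ((p:ℝ) - 1) * (x * (1 - (p:ℝ) * x)) ≤ 1 - (1 + ((p:ℝ) - 1) * x)⁻¹ := by
      have h2 : 1 - (1 + ((p:ℝ) - 1) * x)⁻¹ = ((p:ℝ) - 1) * x / (1 + ((p:ℝ) - 1) * x) := by
        field_simp; ring
      rw [h2, le_div_iff₀ ht0]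
      have h5 : (1 - (p:ℝ) * x) * (1 + ((p:ℝ) - 1) * x) ≤ 1 := by
        have h6 : 0 ≤ (p:ℝ) * ((p:ℝ) - 1) * (x * x) :=
          mul_nonneg (mul_nonneg hppos.le (by linarith)) (mul_nonneg hx0.le hx0.le)
        nlinarith [hx0.le]
      have h7 : (0:ℝ) ≤ ((p:ℝ) - 1) * x := mul_nonneg (by linarith) hx0.le
      nlinarith [mul_le_mul_of_nonneg_left h5 h7]
    rw [hrpow, le_div_iff₀ (by linarith : (0:ℝ) < (p:ℝ) - 1)]
    linarith [hkey, hyinv]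

/-- The mechanism of shock formation (Section 8.2 with Proposition 3.3):
under the largeness assumption on A, the quantity
1 − (p/2)·A·δ^{−b}·I_p(1+δ^b) + K·δ^{(1−ε₀)p}  (b = 1−(1−ε₀)p)
is negative for all sufficiently small δ > 0, where I_p(t) = (1−t^{1−p})/(p−1)
for p ≥ 2 and I₁(t) = ln t. -/
theorem shock_formation_mechanism
    (p : ℕ) (hp : 1 ≤ p) (ε₀ : ℝ) (hε : ε₀ ∈ Set.Ioo (0 : ℝ) 1)
    (hb : 0 ≤ 1 - (1 - ε₀) * p) (A : ℝ)
    (hA1 : 0 < 1 - (1 - ε₀) * p → A > 2 / (p : ℝ))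
    (hA2 : 1 - (1 - ε₀) * p = 0 →
      A > ((p : ℝ) - 1) * 2 ^ p / ((2 ^ (p - 1) - 1) * (p : ℝ))) :
    ∀ K : ℝ, 0 ≤ K → ∃ δ₀ ∈ Set.Ioo (0 : ℝ) 1, ∀ δ ∈ Set.Ioo (0 : ℝ) δ₀,
      1 - ((p : ℝ) / 2) * A * δ ^ (-(1 - (1 - ε₀) * p)) *
          (if p = 1 then Real.log (1 + δ ^ (1 - (1 - ε₀) * p))
           else (1 - (1 + δ ^ (1 - (1 - ε₀) * p)) ^ ((1 : ℝ) - (p : ℝ))) / ((p : ℝ) - 1))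
        + K * δ ^ ((1 - ε₀) * p) < 0 := by
  obtain ⟨hε0, hε1⟩ := hε
  intro K hK
  have hppos : (0:ℝ) < p := by exact_mod_cast Nat.pos_of_ne_zero (by omega)
  have he : 0 < (1 - ε₀) * p := mul_pos (by linarith) hppos
  rcases eq_or_lt_of_le hb with hb0 | hbpos
  · -- critical case b = 0
    have hb0' : 1 - (1 - ε₀) * (p:ℝ) = 0 := hb0.symm
    have hp2 : 2 ≤ p := by
      by_contra h
      have hp1 : p = 1 := by omega
      rw [hp1] at hb0'
      push_cast at hb0'
      linarith
    have hpne1 : ¬ p = 1 := by omega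
    have hA' := hA2 hb0'
    -- notation
    have hpm1 : ((p - 1 : ℕ) : ℝ) = (p:ℝ) - 1 := by
      push_cast [Nat.cast_sub hp]; ring
    set q : ℝ := (2:ℝ) ^ (p - 1) with hqdef
    have hq2 : (2:ℝ) ≤ q := by
      calc (2:ℝ) = 2 ^ 1 := by ring
      _ ≤ 2 ^ (p-1) := by
        apply pow_le_pow_right₀ (by norm_num) (by omega)
    have hq0 : (0:ℝ) < q := by linarith
    have h2p : (2:ℝ) ^ p = 2 * q := by
      rw [hqdef, ← pow_succ']
      congr 1
      omega
    have hpR : (2:ℝ) ≤ (p:ℝ) := by exact_mod_cast hp2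
    have key : 2 * ((p:ℝ) - 1) * q < (p:ℝ) * A * (q - 1) := by
      rw [gt_iff_lt, div_lt_iff₀ (by nlinarith)] at hA'
      rw [h2p] at hA'
      nlinarith [hA']
    have hrpow : (2:ℝ) ^ ((1:ℝ) - (p:ℝ)) = q⁻¹ := by
      rw [show (1:ℝ) - (p:ℝ) = -(((p-1:ℕ):ℝ)) by rw [hpm1]; ring,
        Real.rpow_neg (by norm_num), Real.rpow_natCast]
    have hC : 1 - ((p:ℝ)/2) * A * ((1 - q⁻¹) / ((p:ℝ) - 1)) < 0 := by
      have h1 : (1:ℝ) - q⁻¹ = (q - 1)/q := by field_simp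
      have h2 : ((p:ℝ) - 1) < (p:ℝ)/2 * A * (1 - q⁻¹) := by
        rw [h1, ← mul_div_assoc, lt_div_iff₀ hq0]
        nlinarith
      have h3 : (1:ℝ) < (p:ℝ)/2 * A * (1 - q⁻¹) / ((p:ℝ) - 1) :=
        (one_lt_div (by linarith)).mpr h2
      rw [mul_div_assoc] at h3
      linarith
    apply aux_package
    filter_upwards [aux_small K ((1 - ε₀) * p)
        (-(1 - ((p:ℝ)/2) * A * ((1 - q⁻¹) / ((p:ℝ) - 1)))) he (by linarith),
      eventually_mem_nhdsWithin] with δ h1 hδ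
    rw [if_neg hpne1, hb0']
    rw [neg_zero, Real.rpow_zero]
    rw [show (1:ℝ) + 1 = 2 by norm_num, hrpow]
    linarith
  · -- case b > 0
    have hA' := hA1 hbpos
    have hA0 : 0 < A := lt_trans (by positivity) hA'
    have hc : (0:ℝ) < (p:ℝ) * A / 2 - 1 := by
      rw [gt_iff_lt, div_lt_iff₀ hppos] at hA'
      linarith
    apply aux_package
    filter_upwards [aux_small ((p:ℝ)^2 * A / 2) (1 - (1 - ε₀) * (p:ℝ))
        (((p:ℝ) * A / 2 - 1)/2) hbpos (by linarith),
      aux_small K ((1 - ε₀) * p) (((p:ℝ) * A / 2 - 1)/2) he (by linarith),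
      eventually_mem_nhdsWithin] with δ h1 h2 hδ
    have hδ0 : (0:ℝ) < δ := hδ
    have hx0 : (0:ℝ) < δ ^ (1 - (1 - ε₀) * (p:ℝ)) := Real.rpow_pos_of_pos hδ0 _
    have hkb := key_bound p hp _ hx0
    rw [Real.rpow_neg hδ0.le]
    have hlow : 1 - (p:ℝ) * δ ^ (1 - (1 - ε₀) * (p:ℝ)) ≤
        (δ ^ (1 - (1 - ε₀) * (p:ℝ)))⁻¹ *
        (if p = 1 then Real.log (1 + δ ^ (1 - (1 - ε₀) * (p:ℝ)))
         else (1 - (1 + δ ^ (1 - (1 - ε₀) * (p:ℝ))) ^ ((1 : ℝ) - (p : ℝ))) / ((p : ℝ) - 1)) := by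
      have := mul_le_mul_of_nonneg_left hkb (inv_nonneg.mpr hx0.le)
      rwa [← mul_assoc, inv_mul_cancel₀ hx0.ne', one_mul] at this
    have hmul := mul_le_mul_of_nonneg_left hlow
      (show (0:ℝ) ≤ ((p:ℝ)/2) * A by positivity)
    linarith [hmul, h1, h2]
end

section
/- With the acoustic geometry setup and Levi-Civita connection D below, for all smooth vector fields X, Y on U satisfying X⁰ = Y⁰ = 0 and Xu = Yu = 0 (i.e. tangent to the spheres S_{t,u}) the following hold on U: (i) g(D_X L̄, Y) = −c^{−2}μ · g(D_X L, Y); (ii) g(D_X T̂, Y) = −c^{−1} · g(D_X L, Y); (iii) g(D_X L, T) = −c^{−1}μ · Xc; (iv) −g(D_X T, L) = c · X(c^{−1}μ). -/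
noncomputable section

open scoped BigOperators

/-- Points of ℝ⁴ with coordinates (x⁰,x¹,x²,x³) = (t,x¹,x²,x³). -/
abbrev Pt : Type := Fin 4 → ℝ

/-- Partial derivative ∂_α f. -/
def pd (f : Pt → ℝ) (α : Fin 4) (x : Pt) : ℝ :=
  fderiv ℝ f x (Pi.single α 1)

/-- The acoustic metric g = diag(−c², 1, 1, 1). -/
def gMat (c : Pt → ℝ) (α β : Fin 4) (x : Pt) : ℝ :=
  if α = β then (if α = 0 then -(c x) ^ 2 else 1) else 0

/-- The inverse metric g⁻¹ = diag(−c⁻², 1, 1, 1). -/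
def gInv (c : Pt → ℝ) (α β : Fin 4) (x : Pt) : ℝ :=
  if α = β then (if α = 0 then -((c x) ^ 2)⁻¹ else 1) else 0

/-- Vf = V^α ∂_α f. -/
def vApp (V : Pt → Fin 4 → ℝ) (f : Pt → ℝ) (x : Pt) : ℝ :=
  ∑ α, V x α * pd f α x

/-- g(V, W) = g_{αβ} V^α W^β. -/
def gPair (c : Pt → ℝ) (V W : Pt → Fin 4 → ℝ) (x : Pt) : ℝ :=
  ∑ α, ∑ β, gMat c α β x * V x α * W x β

/-- L̂^α = −g^{αβ}∂_β u. -/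
def Lhat (c u : Pt → ℝ) (x : Pt) (α : Fin 4) : ℝ :=
  -∑ β, gInv c α β x * pd u β x

/-- The inverse foliation density μ = 1/(c⁻²∂_t u). -/
def invDens (c u : Pt → ℝ) (x : Pt) : ℝ :=
  (((c x) ^ 2)⁻¹ * pd u 0 x)⁻¹

/-- L = μ L̂  (so L⁰ = 1). -/
def Lvec (c u : Pt → ℝ) (x : Pt) (α : Fin 4) : ℝ :=
  invDens c u x * Lhat c u x α

/-- T̂ = c⁻¹(∂_t − L). -/
def That (c u : Pt → ℝ) (x : Pt) (α : Fin 4) : ℝ :=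
  (c x)⁻¹ * ((if α = 0 then 1 else 0) - Lvec c u x α)

/-- T = c⁻¹ μ T̂. -/
def Tvec (c u : Pt → ℝ) (x : Pt) (α : Fin 4) : ℝ :=
  (c x)⁻¹ * invDens c u x * That c u x α

/-- L̄ = c⁻²μ L + 2T. -/
def Lbar (c u : Pt → ℝ) (x : Pt) (α : Fin 4) : ℝ :=
  ((c x) ^ 2)⁻¹ * invDens c u x * Lvec c u x α + 2 * Tvec c u x α

/-- The induced inverse metric ĝ^{αβ} = g^{αβ} + (2μ)⁻¹(L^αL̄^β + L̄^αL^β). -/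
def ghat (c u : Pt → ℝ) (α β : Fin 4) (x : Pt) : ℝ :=
  gInv c α β x + (2 * invDens c u x)⁻¹ *
    (Lvec c u x α * Lbar c u x β + Lbar c u x α * Lvec c u x β)

/-- The Christoffel symbols Γ_{αβγ} = ½(∂_α g_{βγ} + ∂_γ g_{αβ} − ∂_β g_{αγ}). -/
def Gamlow (c : Pt → ℝ) (α β γ : Fin 4) (x : Pt) : ℝ :=
  (1 / 2) * (pd (fun y => gMat c β γ y) α x + pd (fun y => gMat c α β y) γ x
    - pd (fun y => gMat c α γ y) β x)

/-- Γ^γ_{αβ} = g^{γλ} Γ_{αλβ}. -/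
def Gam (c : Pt → ℝ) (γ α β : Fin 4) (x : Pt) : ℝ :=
  ∑ l, gInv c γ l x * Gamlow c α l β x

/-- The Levi-Civita covariant derivative: (D_X V)^γ = X^α(∂_α V^γ + Γ^γ_{αβ}V^β). -/
def covD (c : Pt → ℝ) (X V : Pt → Fin 4 → ℝ) (x : Pt) (γ : Fin 4) : ℝ :=
  ∑ α, X x α * (pd (fun y => V y γ) α x + ∑ β, Gam c γ α β x * V x β)

set_option maxHeartbeats 2000000

section Helpers

variable {f g : Pt → ℝ} {x : Pt} {α : Fin 4}

lemma pd_congr {U : Set Pt} (hU : IsOpen U) (hx : x ∈ U) (h : ∀ y ∈ U, f y = g y) :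
    pd f α x = pd g α x := by
  unfold pd
  rw [Filter.EventuallyEq.fderiv_eq]
  filter_upwards [hU.mem_nhds hx] using h

lemma pd_const (a : ℝ) : pd (fun _ => a) α x = 0 := by
  simp [pd]

lemma pd_mul (hf : DifferentiableAt ℝ f x) (hg : DifferentiableAt ℝ g x) :
    pd (fun y => f y * g y) α x = pd f α x * g x + f x * pd g α x := by
  unfold pd; rw [fderiv_fun_mul hf hg]; simp; ring

lemma pd_neg : pd (fun y => -f y) α x = -pd f α x := by
  unfold pd; rw [fderiv_fun_neg]; simp

lemma pd_add (hf : DifferentiableAt ℝ f x) (hg : DifferentiableAt ℝ g x) :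
    pd (fun y => f y + g y) α x = pd f α x + pd g α x := by
  unfold pd; rw [fderiv_fun_add hf hg]; simp

lemma pd_inv (hf : DifferentiableAt ℝ f x) (h0 : f x ≠ 0) :
    pd (fun y => (f y)⁻¹) α x = -((f x) ^ 2)⁻¹ * pd f α x := by
  unfold pd
  have h : (fun y => (f y)⁻¹) = (fun t : ℝ => t⁻¹) ∘ f := rfl
  rw [h, fderiv_comp x (differentiableAt_inv h0) hf, fderiv_inv]
  simp [mul_comm]

lemma pd_sq (hf : DifferentiableAt ℝ f x) :
    pd (fun y => (f y) ^ 2) α x = 2 * f x * pd f α x := by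
  have h : (fun y => (f y) ^ 2) = fun y => f y * f y := by funext y; ring
  rw [h, pd_mul hf hf]; ring

lemma pd_diffAt {U : Set Pt} {u : Pt → ℝ} (hU : IsOpen U) (hu : ContDiffOn ℝ (⊤ : ℕ∞) u U)
    (hx : x ∈ U) (j : Fin 4) : DifferentiableAt ℝ (fun y => pd u j y) x := by
  have hca : ContDiffAt ℝ (⊤ : ℕ∞) u x := hu.contDiffAt (hU.mem_nhds hx)
  have h1 : ContDiffAt ℝ 1 (fderiv ℝ u) x := hca.fderiv_right (by decide)
  exact (h1.differentiableAt one_ne_zero).clm_apply (differentiableAt_const _)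

variable {c u : Pt → ℝ}

lemma Lhat_spatial (c u : Pt → ℝ) (y : Pt) {j : Fin 4} (hj : j ≠ 0) :
    Lhat c u y j = -pd u j y := by
  fin_cases j
  · simp at hj
  all_goals simp [Lhat, gInv, Fin.sum_univ_four]

lemma Lvec_spatial (c u : Pt → ℝ) (y : Pt) {j : Fin 4} (hj : j ≠ 0) :
    Lvec c u y j = -(invDens c u y * pd u j y) := by
  simp only [Lvec, Lhat_spatial c u y hj]; ring

lemma That_spatial (c u : Pt → ℝ) (y : Pt) {j : Fin 4} (hj : j ≠ 0) :
    That c u y j = -((c y)⁻¹ * Lvec c u y j) := by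
  simp only [That, if_neg hj]; ring

lemma Tvec_spatial (c u : Pt → ℝ) (y : Pt) {j : Fin 4} (hj : j ≠ 0) :
    Tvec c u y j = -(((c y) ^ 2)⁻¹ * invDens c u y * Lvec c u y j) := by
  simp only [Tvec, That_spatial c u y hj]; ring

lemma Lbar_spatial (c u : Pt → ℝ) (y : Pt) {j : Fin 4} (hj : j ≠ 0) :
    Lbar c u y j = -(((c y) ^ 2)⁻¹ * invDens c u y * Lvec c u y j) := by
  simp only [Lbar, Tvec, That_spatial c u y hj]; ring

lemma pd_gMat (hc : DifferentiableAt ℝ c x) (β γ α : Fin 4) :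
    pd (fun y => gMat c β γ y) α x
      = if β = 0 ∧ γ = 0 then -(2 * c x * pd c α x) else 0 := by
  by_cases h : β = 0 ∧ γ = 0
  · obtain ⟨rfl, rfl⟩ := h
    have e : (fun y => gMat c 0 0 y) = fun y => -((c y) ^ 2) := by
      funext y; simp [gMat]
    rw [if_pos ⟨rfl, rfl⟩, e, pd_neg, pd_sq hc]
  · have e : (fun y => gMat c β γ y) = fun _ => if β = γ then (1 : ℝ) else 0 := by
      funext y; simp only [gMat]
      split_ifs with h1 h2
      · exact absurd ⟨h2, by rw [← h1]; exact h2⟩ h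
      · rfl
      · rfl
    rw [if_neg h, e, pd_const]

lemma Gam_vanish (hc : DifferentiableAt ℝ c x) {γ α β : Fin 4} (hα : α ≠ 0)
    (h : γ ≠ 0 ∨ β ≠ 0) : Gam c γ α β x = 0 := by
  unfold Gam
  apply Finset.sum_eq_zero
  intro l _
  rcases eq_or_ne γ l with rfl | hne
  · have hGamlow : Gamlow c α γ β x = 0 := by
      unfold Gamlow
      rw [pd_gMat hc γ β α, pd_gMat hc α γ β, pd_gMat hc α β γ,
        if_neg (by rintro ⟨h1, h2⟩; rcases h with h | h; exact h h1; exact h h2),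
        if_neg (by rintro ⟨h1, _⟩; exact hα h1),
        if_neg (by rintro ⟨h1, _⟩; exact hα h1)]
      ring
    rw [hGamlow, mul_zero]
  · have : gInv c γ l x = 0 := by simp [gInv, hne]
    rw [this, zero_mul]

end Helpers

/-- Lemma 2.4: second fundamental forms and torsion one-forms of the spheres S_{t,u}:
χ̄ = −c⁻²μχ, σ = −c⁻¹χ, ζ_X = −c⁻¹μ Xc, η_X = c X(c⁻¹μ). -/
theorem second_fundamental_forms_and_torsion
    (U : Set Pt) (hU : IsOpen U) (c u : Pt → ℝ)
    (hc : ContDiffOn ℝ (⊤ : ℕ∞) c U) (hcpos : ∀ x ∈ U, 0 < c x)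
    (hu : ContDiffOn ℝ (⊤ : ℕ∞) u U)
    (heik : ∀ x ∈ U, ∑ α, ∑ β, gInv c α β x * pd u α x * pd u β x = 0)
    (hut : ∀ x ∈ U, 0 < pd u 0 x)
    (X Y : Pt → Fin 4 → ℝ)
    (hX : ∀ γ : Fin 4, ContDiffOn ℝ (⊤ : ℕ∞) (fun x => X x γ) U)
    (hY : ∀ γ : Fin 4, ContDiffOn ℝ (⊤ : ℕ∞) (fun x => Y x γ) U)
    (hX0 : ∀ x ∈ U, X x 0 = 0) (hXu : ∀ x ∈ U, vApp X u x = 0)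
    (hY0 : ∀ x ∈ U, Y x 0 = 0) (hYu : ∀ x ∈ U, vApp Y u x = 0) :
    ∀ x ∈ U,
      gPair c (covD c X (Lbar c u)) Y x
        = -(((c x) ^ 2)⁻¹ * invDens c u x) * gPair c (covD c X (Lvec c u)) Y x ∧
      gPair c (covD c X (That c u)) Y x
        = -(c x)⁻¹ * gPair c (covD c X (Lvec c u)) Y x ∧
      gPair c (covD c X (Lvec c u)) (Tvec c u) x
        = -((c x)⁻¹ * invDens c u x) * vApp X c x ∧
      -gPair c (covD c X (Tvec c u)) (Lvec c u) x
        = c x * vApp X (fun y => (c y)⁻¹ * invDens c u y) x := by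
  intro x hx
  have hk : 0 < c x := hcpos x hx
  have hk0 : c x ≠ 0 := ne_of_gt hk
  have hw0 : 0 < pd u 0 x := hut x hx
  have hw00 : pd u 0 x ≠ 0 := ne_of_gt hw0
  have hcD : DifferentiableAt ℝ c x :=
    (hc.contDiffAt (hU.mem_nhds hx)).differentiableAt (by decide)
  have hwD : ∀ j, DifferentiableAt ℝ (fun y => pd u j y) x := pd_diffAt hU hu hx
  have hq20 : ((c x) ^ 2)⁻¹ * pd u 0 x ≠ 0 := by positivity
  have hc2D : DifferentiableAt ℝ (fun y => ((c y) ^ 2)⁻¹) x :=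
    (hcD.pow 2).inv (pow_ne_zero 2 hk0)
  have hinD : DifferentiableAt ℝ (fun y => ((c y) ^ 2)⁻¹ * pd u 0 y) x := hc2D.mul (hwD 0)
  have hmD : DifferentiableAt ℝ (invDens c u) x := hinD.inv hq20
  have hmx : invDens c u x = (c x) ^ 2 / pd u 0 x := by
    show (((c x) ^ 2)⁻¹ * pd u 0 x)⁻¹ = _
    field_simp
  have hDm : ∀ a, pd (invDens c u) a x
      = 2 * c x * pd c a x / pd u 0 x
        - (c x) ^ 2 * pd (fun y => pd u 0 y) a x / (pd u 0 x) ^ 2 := by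
    intro a
    have h1 : pd (invDens c u) a x = pd (fun y => (((c y) ^ 2)⁻¹ * pd u 0 y)⁻¹) a x := rfl
    rw [h1, pd_inv hinD hq20, pd_mul hc2D (hwD 0), pd_inv (f := fun y => (c y) ^ 2) (hcD.pow 2) (pow_ne_zero 2 hk0),
      pd_sq hcD]
    field_simp
    ring
  have hL0U : ∀ y ∈ U, Lvec c u y 0 = 1 := by
    intro y hy
    have h : ((c y) ^ 2)⁻¹ * pd u 0 y ≠ 0 := by
      have h1 := hcpos y hy; have h2 := hut y hy; positivity
    have hLhat : Lhat c u y 0 = ((c y) ^ 2)⁻¹ * pd u 0 y := by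
      simp [Lhat, gInv, Fin.sum_univ_four]
    simp only [Lvec, hLhat, invDens]
    exact inv_mul_cancel₀ h
  have hTv0U : ∀ y ∈ U, Tvec c u y 0 = 0 := by
    intro y hy
    simp [Tvec, That, hL0U y hy]
  have hTv0x : Tvec c u x 0 = 0 := hTv0U x hx
  have hL0x : Lvec c u x 0 = 1 := hL0U x hx
  have hpdTv0 : ∀ a, pd (fun y => Tvec c u y 0) a x = 0 := fun a =>
    (pd_congr (g := fun _ => (0 : ℝ)) hU hx hTv0U).trans (pd_const 0)
  have hLx : ∀ j : Fin 4, j ≠ 0 → Lvec c u x j = -((c x) ^ 2 * pd u j x / pd u 0 x) := by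
    intro j hj; rw [Lvec_spatial c u x hj, hmx]; ring
  have hTvx : ∀ j : Fin 4, j ≠ 0 →
      Tvec c u x j = (c x) ^ 2 * pd u j x / (pd u 0 x) ^ 2 := by
    intro j hj
    rw [Tvec_spatial c u x hj, Lvec_spatial c u x hj, hmx]
    linear_combination (norm := (field_simp; ring1))
  have hLD : ∀ j : Fin 4, j ≠ 0 → DifferentiableAt ℝ (fun y => Lvec c u y j) x := by
    intro j hj
    have e : (fun y => Lvec c u y j) = fun y => -(invDens c u y * pd u j y) :=
      funext fun y => Lvec_spatial c u y hj
    rw [e]; exact (hmD.mul (hwD j)).neg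
  have hpdL : ∀ (a j : Fin 4), j ≠ 0 → pd (fun y => Lvec c u y j) a x
      = -(2 * c x * pd c a x * pd u j x / pd u 0 x)
        + (c x) ^ 2 * pd (fun y => pd u 0 y) a x * pd u j x / (pd u 0 x) ^ 2
        - (c x) ^ 2 * pd (fun y => pd u j y) a x / pd u 0 x := by
    intro a j hj
    have e : (fun y => Lvec c u y j) = fun y => -(invDens c u y * pd u j y) :=
      funext fun y => Lvec_spatial c u y hj
    rw [e, pd_neg, pd_mul hmD (hwD j), hDm a, hmx]
    field_simp
    ring
  have hFD : DifferentiableAt ℝ (fun y => ((c y) ^ 2)⁻¹ * invDens c u y) x := hc2D.mul hmD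
  have hpdLbar : ∀ (a j : Fin 4), j ≠ 0 → pd (fun y => Lbar c u y j) a x
      = 2 * c x * pd c a x * pd u j x / (pd u 0 x) ^ 2
        - 2 * (c x) ^ 2 * pd (fun y => pd u 0 y) a x * pd u j x / (pd u 0 x) ^ 3
        + (c x) ^ 2 * pd (fun y => pd u j y) a x / (pd u 0 x) ^ 2 := by
    intro a j hj
    have e : (fun y => Lbar c u y j)
        = fun y => -((((c y) ^ 2)⁻¹ * invDens c u y) * Lvec c u y j) := by
      funext y; rw [Lbar_spatial c u y hj]
    rw [e, pd_neg, pd_mul hFD (hLD j hj), pd_mul hc2D hmD,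
      pd_inv (f := fun y => (c y) ^ 2) (hcD.pow 2) (pow_ne_zero 2 hk0), pd_sq hcD, hDm a, hpdL a j hj,
      hLx j hj, hmx]
    field_simp
    ring
  have hpdTv : ∀ (a j : Fin 4), j ≠ 0 → pd (fun y => Tvec c u y j) a x
      = 2 * c x * pd c a x * pd u j x / (pd u 0 x) ^ 2
        - 2 * (c x) ^ 2 * pd (fun y => pd u 0 y) a x * pd u j x / (pd u 0 x) ^ 3
        + (c x) ^ 2 * pd (fun y => pd u j y) a x / (pd u 0 x) ^ 2 := by
    intro a j hj
    have e : (fun y => Tvec c u y j) = fun y => Lbar c u y j := by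
      funext y; rw [Tvec_spatial c u y hj, Lbar_spatial c u y hj]
    rw [e]; exact hpdLbar a j hj
  have hpdThat : ∀ (a j : Fin 4), j ≠ 0 → pd (fun y => That c u y j) a x
      = pd c a x * pd u j x / pd u 0 x
        - c x * pd (fun y => pd u 0 y) a x * pd u j x / (pd u 0 x) ^ 2
        + c x * pd (fun y => pd u j y) a x / pd u 0 x := by
    intro a j hj
    have e : (fun y => That c u y j) = fun y => -((c y)⁻¹ * Lvec c u y j) :=
      funext fun y => That_spatial c u y hj
    rw [e, pd_neg, pd_mul (f := fun y => (c y)⁻¹) (hcD.inv hk0) (hLD j hj), pd_inv hcD hk0, hpdL a j hj, hLx j hj]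
    field_simp
    ring
  have hpdcm : ∀ a, pd (fun y => (c y)⁻¹ * invDens c u y) a x
      = pd c a x / pd u 0 x - c x * pd (fun y => pd u 0 y) a x / (pd u 0 x) ^ 2 := by
    intro a
    rw [pd_mul (f := fun y => (c y)⁻¹) (hcD.inv hk0) hmD, pd_inv hcD hk0, hDm a, hmx]
    field_simp
    ring
  have hsq : pd u 1 x * pd u 1 x + pd u 2 x * pd u 2 x + pd u 3 x * pd u 3 x
      = (pd u 0 x) ^ 2 / (c x) ^ 2 := by
    have h := heik x hx
    simp [gInv, Fin.sum_univ_four] at h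
    linear_combination (norm := (field_simp; ring1)) h
  have hP : ∀ a : Fin 4,
      pd u 1 x * pd (fun y => pd u 1 y) a x + pd u 2 x * pd (fun y => pd u 2 y) a x
        + pd u 3 x * pd (fun y => pd u 3 y) a x
      = -(pd c a x * (pd u 0 x) ^ 2) / (c x) ^ 3
        + pd u 0 x * pd (fun y => pd u 0 y) a x / (c x) ^ 2 := by
    intro a
    have hzero : pd (fun y => -(((c y) ^ 2)⁻¹ * (pd u 0 y * pd u 0 y))
        + (pd u 1 y * pd u 1 y + (pd u 2 y * pd u 2 y + pd u 3 y * pd u 3 y))) a x = 0 := by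
      rw [pd_congr (g := fun _ => (0 : ℝ)) hU hx ?_, pd_const]
      intro y hy
      have h := heik y hy
      simp [gInv, Fin.sum_univ_four] at h
      linear_combination h
    rw [pd_add (f := fun y => -(((c y) ^ 2)⁻¹ * (pd u 0 y * pd u 0 y)))
        (g := fun y => pd u 1 y * pd u 1 y + (pd u 2 y * pd u 2 y + pd u 3 y * pd u 3 y)) ((hc2D.mul ((hwD 0).mul (hwD 0))).neg)
        (((hwD 1).mul (hwD 1)).add (((hwD 2).mul (hwD 2)).add ((hwD 3).mul (hwD 3)))),
      pd_neg, pd_mul (g := fun y => pd u 0 y * pd u 0 y) hc2D ((hwD 0).mul (hwD 0)), pd_mul (hwD 0) (hwD 0),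
      pd_add (f := fun y => pd u 1 y * pd u 1 y)
        (g := fun y => pd u 2 y * pd u 2 y + pd u 3 y * pd u 3 y) ((hwD 1).mul (hwD 1)) (((hwD 2).mul (hwD 2)).add ((hwD 3).mul (hwD 3))),
      pd_add (f := fun y => pd u 2 y * pd u 2 y) (g := fun y => pd u 3 y * pd u 3 y)
        ((hwD 2).mul (hwD 2)) ((hwD 3).mul (hwD 3)),
      pd_mul (hwD 1) (hwD 1), pd_mul (hwD 2) (hwD 2), pd_mul (hwD 3) (hwD 3),
      pd_inv (f := fun y => (c y) ^ 2) (hcD.pow 2) (pow_ne_zero 2 hk0), pd_sq hcD] at hzero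
    linear_combination (norm := (field_simp; ring1)) (1 / 2 : ℝ) * hzero
  have hXw : X x 1 * pd u 1 x + X x 2 * pd u 2 x + X x 3 * pd u 3 x = 0 := by
    have h := hXu x hx
    simp [vApp, Fin.sum_univ_four, hX0 x hx] at h
    linear_combination h
  have hYw : Y x 1 * pd u 1 x + Y x 2 * pd u 2 x + Y x 3 * pd u 3 x = 0 := by
    have h := hYu x hx
    simp [vApp, Fin.sum_univ_four, hY0 x hx] at h
    linear_combination h
  have hGam : ∀ γ α β : Fin 4, γ ≠ 0 → α ≠ 0 → Gam c γ α β x = 0 :=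
    fun γ α β h1 h2 => Gam_vanish hcD h2 (Or.inl h1)
  have hGam0 : ∀ α β : Fin 4, α ≠ 0 → β ≠ 0 → Gam c 0 α β x = 0 :=
    fun α β h1 h2 => Gam_vanish hcD h1 (Or.inr h2)
  have h1 : (1 : Fin 4) ≠ 0 := by decide
  have h2 : (2 : Fin 4) ≠ 0 := by decide
  have h3 : (3 : Fin 4) ≠ 0 := by decide
  have hgP : ∀ V W : Pt → Fin 4 → ℝ, gPair c (covD c X V) W x
      = -((c x) ^ 2 * (covD c X V x 0 * W x 0))
        + (covD c X V x 1 * W x 1 + covD c X V x 2 * W x 2 + covD c X V x 3 * W x 3) := by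
    intro V W
    simp [gPair, gMat, Fin.sum_univ_four]
    ring
  have hcovj : ∀ (V : Pt → Fin 4 → ℝ) (j : Fin 4), j ≠ 0 → covD c X V x j
      = X x 1 * pd (fun y => V y j) 1 x + X x 2 * pd (fun y => V y j) 2 x
        + X x 3 * pd (fun y => V y j) 3 x := by
    intro V j hj
    simp only [covD, Fin.sum_univ_four, hX0 x hx,
      hGam j 1 0 hj (by decide), hGam j 1 1 hj (by decide), hGam j 1 2 hj (by decide),
      hGam j 1 3 hj (by decide), hGam j 2 0 hj (by decide), hGam j 2 1 hj (by decide),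
      hGam j 2 2 hj (by decide), hGam j 2 3 hj (by decide), hGam j 3 0 hj (by decide),
      hGam j 3 1 hj (by decide), hGam j 3 2 hj (by decide), hGam j 3 3 hj (by decide)]
    ring
  have hcov0T : covD c X (Tvec c u) x 0 = 0 := by
    simp only [covD, Fin.sum_univ_four, hX0 x hx, hpdTv0, hTv0x,
      hGam0 1 1 (by decide) (by decide), hGam0 1 2 (by decide) (by decide),
      hGam0 1 3 (by decide) (by decide), hGam0 2 1 (by decide) (by decide),
      hGam0 2 2 (by decide) (by decide), hGam0 2 3 (by decide) (by decide),
      hGam0 3 1 (by decide) (by decide), hGam0 3 2 (by decide) (by decide),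
      hGam0 3 3 (by decide) (by decide)]
    ring
  have hpdL1 := fun a => hpdL a 1 h1
  have hpdL2 := fun a => hpdL a 2 h2
  have hpdL3 := fun a => hpdL a 3 h3
  have hpdLbar1 := fun a => hpdLbar a 1 h1
  have hpdLbar2 := fun a => hpdLbar a 2 h2
  have hpdLbar3 := fun a => hpdLbar a 3 h3
  have hpdTv1 := fun a => hpdTv a 1 h1
  have hpdTv2 := fun a => hpdTv a 2 h2
  have hpdTv3 := fun a => hpdTv a 3 h3
  have hpdThat1 := fun a => hpdThat a 1 h1
  have hpdThat2 := fun a => hpdThat a 2 h2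
  have hpdThat3 := fun a => hpdThat a 3 h3
  have hLx1 := hLx 1 h1
  have hLx2 := hLx 2 h2
  have hLx3 := hLx 3 h3
  have hTvx1 := hTvx 1 h1
  have hTvx2 := hTvx 2 h2
  have hTvx3 := hTvx 3 h3
  refine ⟨?_, ?_, ?_, ?_⟩
  · rw [hgP (Lbar c u) Y, hgP (Lvec c u) Y, hY0 x hx,
      hcovj (Lbar c u) 1 h1, hcovj (Lbar c u) 2 h2, hcovj (Lbar c u) 3 h3,
      hcovj (Lvec c u) 1 h1, hcovj (Lvec c u) 2 h2, hcovj (Lvec c u) 3 h3, hmx]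
    simp only [hpdLbar1, hpdLbar2, hpdLbar3, hpdL1, hpdL2, hpdL3]
    linear_combination (norm := (field_simp; ring1))
      (-((c x) ^ 2 / (pd u 0 x) ^ 3) * (X x 1 * pd (fun y => pd u 0 y) 1 x
        + X x 2 * pd (fun y => pd u 0 y) 2 x + X x 3 * pd (fun y => pd u 0 y) 3 x)) * hYw
  · rw [hgP (That c u) Y, hgP (Lvec c u) Y, hY0 x hx,
      hcovj (That c u) 1 h1, hcovj (That c u) 2 h2, hcovj (That c u) 3 h3,
      hcovj (Lvec c u) 1 h1, hcovj (Lvec c u) 2 h2, hcovj (Lvec c u) 3 h3]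
    simp only [hpdThat1, hpdThat2, hpdThat3, hpdL1, hpdL2, hpdL3]
    linear_combination (norm := (field_simp; ring1))
      (-(X x 1 * pd c 1 x + X x 2 * pd c 2 x + X x 3 * pd c 3 x) / pd u 0 x) * hYw
  · rw [hgP (Lvec c u) (Tvec c u), hTv0x,
      hcovj (Lvec c u) 1 h1, hcovj (Lvec c u) 2 h2, hcovj (Lvec c u) 3 h3, hmx]
    simp only [hpdL1, hpdL2, hpdL3, hTvx1, hTvx2, hTvx3, vApp, Fin.sum_univ_four, hX0 x hx]
    linear_combination (norm := (field_simp; ring1))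
      (X x 1 * (-2 * (c x) ^ 3 * pd c 1 x / (pd u 0 x) ^ 3
          + (c x) ^ 4 * pd (fun y => pd u 0 y) 1 x / (pd u 0 x) ^ 4)
        + X x 2 * (-2 * (c x) ^ 3 * pd c 2 x / (pd u 0 x) ^ 3
          + (c x) ^ 4 * pd (fun y => pd u 0 y) 2 x / (pd u 0 x) ^ 4)
        + X x 3 * (-2 * (c x) ^ 3 * pd c 3 x / (pd u 0 x) ^ 3
          + (c x) ^ 4 * pd (fun y => pd u 0 y) 3 x / (pd u 0 x) ^ 4)) * hsq
      + (-(c x) ^ 4 * X x 1 / (pd u 0 x) ^ 3) * hP 1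
      + (-(c x) ^ 4 * X x 2 / (pd u 0 x) ^ 3) * hP 2
      + (-(c x) ^ 4 * X x 3 / (pd u 0 x) ^ 3) * hP 3
  · rw [hgP (Tvec c u) (Lvec c u), hcov0T, hL0x,
      hcovj (Tvec c u) 1 h1, hcovj (Tvec c u) 2 h2, hcovj (Tvec c u) 3 h3]
    simp only [hpdTv1, hpdTv2, hpdTv3, hLx1, hLx2, hLx3, vApp, Fin.sum_univ_four,
      hX0 x hx, hpdcm]
    linear_combination (norm := (field_simp; ring1))
      (X x 1 * (2 * (c x) ^ 3 * pd c 1 x / (pd u 0 x) ^ 3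
          - 2 * (c x) ^ 4 * pd (fun y => pd u 0 y) 1 x / (pd u 0 x) ^ 4)
        + X x 2 * (2 * (c x) ^ 3 * pd c 2 x / (pd u 0 x) ^ 3
          - 2 * (c x) ^ 4 * pd (fun y => pd u 0 y) 2 x / (pd u 0 x) ^ 4)
        + X x 3 * (2 * (c x) ^ 3 * pd c 3 x / (pd u 0 x) ^ 3
          - 2 * (c x) ^ 4 * pd (fun y => pd u 0 y) 3 x / (pd u 0 x) ^ 4)) * hsq
      + ((c x) ^ 4 * X x 1 / (pd u 0 x) ^ 3) * hP 1
      + ((c x) ^ 4 * X x 2 / (pd u 0 x) ^ 3) * hP 2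
      + ((c x) ^ 4 * X x 3 / (pd u 0 x) ^ 3) * hP 3
end
end

section
/- Let a > 1 and C₀ > 0, let K be a nonempty compact topological space, let 1 ≤ T, and let μ : [1,T] × K → ℝ be continuous with 0 < μ(t,y) ≤ C₀ for all (t,y). Assume that for each y ∈ K the function t ↦ μ(t,y) is differentiable and that ∂_tμ(t,y) < 0 whenever μ(t,y) ≤ 1 − 1/a. Define μ_min(t) := min_{y∈K} μ(t,y). Then for all 1 ≤ t' ≤ t ≤ T: μ_min(t')^{−1} ≤ max{1, (1−1/a)^{−1}·C₀}·μ_min(t)^{−1}; in particular μ_min(t')^{−a} ≤ (max{1, (1−1/a)^{−1}C₀})^{a}·μ_min(t)^{−a}. -/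
/-- If `f` is continuous on `[t', t]`, has negative derivative wherever `f ≤ c`,
and `f t' ≤ c`, then `f t ≤ c`. -/
lemma barrier (f : ℝ → ℝ) (t' t c : ℝ) (ht : t' ≤ t)
    (hf : ContinuousOn f (Set.Icc t' t))
    (hd : ∀ u ∈ Set.Icc t' t, f u ≤ c → ∃ d < (0:ℝ), HasDerivAt f d u)
    (h0 : f t' ≤ c) : f t ≤ c := by
  set S : Set ℝ := Set.Icc t' t ∩ f ⁻¹' Set.Iic c with hS
  have hSclosed : IsClosed S := hf.preimage_isClosed_of_isClosed isClosed_Icc isClosed_Iic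
  have hSne : S.Nonempty := ⟨t', ⟨le_refl _, ht⟩, h0⟩
  have hSbdd : BddAbove S := ⟨t, fun x hx => hx.1.2⟩
  set u := sSup S with hu
  have huS : u ∈ S := hSclosed.csSup_mem hSne hSbdd
  have huIcc : u ∈ Set.Icc t' t := huS.1
  have hufc : f u ≤ c := huS.2
  rcases eq_or_lt_of_le huIcc.2 with heq | hlt
  · rwa [heq] at hufc
  · exfalso
    obtain ⟨d, hdneg, hderiv⟩ := hd u huIcc hufc
    have hslope : Filter.Tendsto (slope f u) (nhdsWithin u (Set.Ioi u)) (nhds d) :=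
      (hasDerivAt_iff_tendsto_slope.mp hderiv).mono_left
        (nhdsWithin_mono _ (fun x hx => ne_of_gt hx))
    have hev1 : ∀ᶠ r in nhdsWithin u (Set.Ioi u), slope f u r < 0 :=
      hslope.eventually_lt_const hdneg
    have hev2 : ∀ᶠ r in nhdsWithin u (Set.Ioi u), r ∈ Set.Ioo u t :=
      Ioo_mem_nhdsGT_of_mem ⟨le_refl u, hlt⟩
    obtain ⟨r, hr1, hr2⟩ := ((hev1.and hev2).exists)
    have hru : u < r := hr2.1
    have : f r - f u < 0 := by
      have heq : f r - f u = slope f u r * (r - u) := by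
        rw [slope_def_field, div_mul_cancel₀ _ (sub_ne_zero.mpr hru.ne')]
      rw [heq]
      exact mul_neg_of_neg_of_pos hr1 (sub_pos.mpr hru)
    have hrS : r ∈ S := ⟨⟨le_trans huIcc.1 hru.le, hr2.2.le⟩, by
      simp only [Set.mem_preimage, Set.mem_Iic]; linarith⟩
    exact absurd (le_csSup hSbdd hrS) (not_le.mpr hru)

/-- Lemma 6.3(2), monotonicity: if μ is positive, bounded by C₀, and strictly decreasing
in time wherever it is ≤ 1 − 1/a, then μ_min(t')⁻¹ ≤ max{1,(1−1/a)⁻¹C₀}·μ_min(t)⁻¹ for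
t' ≤ t; in particular μ_min(t')^{−a} ≤ (max{1,(1−1/a)⁻¹C₀})^a·μ_min(t)^{−a}. -/
theorem monotonicity_of_mu_min
    (a C₀ : ℝ) (ha : 1 < a) (hC₀ : 0 < C₀)
    (K : Type*) [TopologicalSpace K] [CompactSpace K] [Nonempty K]
    (T : ℝ) (hT : 1 ≤ T) (μ : ℝ → K → ℝ)
    (hcont : ContinuousOn (fun q : ℝ × K => μ q.1 q.2) (Set.Icc 1 T ×ˢ Set.univ))
    (hbdd : ∀ t ∈ Set.Icc (1 : ℝ) T, ∀ y : K, 0 < μ t y ∧ μ t y ≤ C₀)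
    (hdiff : ∀ y : K, ∀ t ∈ Set.Icc (1 : ℝ) T, DifferentiableAt ℝ (fun s => μ s y) t)
    (hderiv : ∀ t ∈ Set.Icc (1 : ℝ) T, ∀ y : K,
      μ t y ≤ 1 - 1 / a → deriv (fun s => μ s y) t < 0) :
    ∀ t' t : ℝ, 1 ≤ t' → t' ≤ t → t ≤ T →
      (⨅ y : K, μ t' y)⁻¹ ≤ max 1 ((1 - 1 / a)⁻¹ * C₀) * (⨅ y : K, μ t y)⁻¹ ∧
      ((⨅ y : K, μ t' y)⁻¹) ^ a
        ≤ (max 1 ((1 - 1 / a)⁻¹ * C₀)) ^ a * ((⨅ y : K, μ t y)⁻¹) ^ a := by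
  have h1a : (0:ℝ) < 1 - 1 / a := by
    have : 1 / a < 1 := by
      rw [div_lt_one (lt_trans one_pos ha)]; exact ha
    linarith
  -- continuity of slices
  have hslice : ∀ t ∈ Set.Icc (1:ℝ) T, Continuous (fun y : K => μ t y) := by
    intro t ht
    rw [← continuousOn_univ]
    exact hcont.comp ((continuous_const.prodMk continuous_id).continuousOn)
      (fun y _ => ⟨ht, Set.mem_univ y⟩)
  have htslice : ∀ y : K, ContinuousOn (fun s => μ s y) (Set.Icc (1:ℝ) T) := by
    intro y
    exact hcont.comp ((continuous_id.prodMk continuous_const).continuousOn)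
      (fun s hs => ⟨hs, Set.mem_univ y⟩)
  -- infimum attained
  have hmin : ∀ t ∈ Set.Icc (1:ℝ) T, ∃ y₀ : K,
      (⨅ y : K, μ t y) = μ t y₀ ∧ ∀ y, μ t y₀ ≤ μ t y := by
    intro t ht
    obtain ⟨y₀, -, hy₀⟩ := isCompact_univ.exists_isMinOn Set.univ_nonempty
      ((hslice t ht).continuousOn)
    have hle : ∀ y, μ t y₀ ≤ μ t y := fun y => hy₀ (Set.mem_univ y)
    refine ⟨y₀, le_antisymm (ciInf_le ⟨0, ?_⟩ y₀) (le_ciInf hle), hle⟩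
    rintro x ⟨y, rfl⟩
    exact (hbdd t ht y).1.le
  intro t' t ht'1 ht't htT
  have ht'mem : t' ∈ Set.Icc (1:ℝ) T := ⟨ht'1, le_trans ht't htT⟩
  have htmem : t ∈ Set.Icc (1:ℝ) T := ⟨le_trans ht'1 ht't, htT⟩
  obtain ⟨y', hy'eq, hy'min⟩ := hmin t' ht'mem
  obtain ⟨y₁, hy₁eq, hy₁min⟩ := hmin t htmem
  set m' := ⨅ y : K, μ t' y with hm'
  set m := ⨅ y : K, μ t y with hm
  have hm'pos : 0 < m' := hy'eq ▸ (hbdd t' ht'mem y').1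
  have hmpos : 0 < m := hy₁eq ▸ (hbdd t htmem y₁).1
  have hmC₀ : m ≤ C₀ := hy₁eq ▸ (hbdd t htmem y₁).2
  have hM1 : (1:ℝ) ≤ max 1 ((1 - 1 / a)⁻¹ * C₀) := le_max_left _ _
  have key : m'⁻¹ ≤ max 1 ((1 - 1 / a)⁻¹ * C₀) * m⁻¹ := by
    rcases le_or_gt m m' with hle | hlt
    · have h1 : m'⁻¹ ≤ m⁻¹ := by
        apply inv_anti₀ hmpos hle
      calc m'⁻¹ ≤ m⁻¹ := h1
        _ = 1 * m⁻¹ := (one_mul _).symm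
        _ ≤ max 1 ((1 - 1 / a)⁻¹ * C₀) * m⁻¹ :=
            mul_le_mul_of_nonneg_right hM1 (inv_nonneg.mpr hmpos.le)
    · -- show 1 - 1/a ≤ m'
      have hge : 1 - 1 / a ≤ m' := by
        by_contra hcon
        push_neg at hcon
        have hbar : μ t y' ≤ m' := by
          apply barrier (fun s => μ s y') t' t m' ht't
          · exact (htslice y').mono (Set.Icc_subset_Icc ht'1 htT)
          · intro u hu hfu
            have humem : u ∈ Set.Icc (1:ℝ) T :=
              ⟨le_trans ht'1 hu.1, le_trans hu.2 htT⟩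
            exact ⟨deriv (fun s => μ s y') u,
              hderiv u humem y' (le_trans hfu hcon.le),
              ((hdiff y' u humem).hasDerivAt)⟩
          · exact le_of_eq hy'eq.symm
        have : m ≤ m' := le_trans (hy₁eq ▸ hy₁min y') hbar
        exact absurd hlt (not_lt.mpr this)
      have h1 : m'⁻¹ ≤ (1 - 1 / a)⁻¹ := inv_anti₀ h1a hge
      have h2 : (1:ℝ) ≤ C₀ * m⁻¹ := by
        rw [← mul_inv_cancel₀ hmpos.ne']
        exact mul_le_mul_of_nonneg_right hmC₀ (inv_nonneg.mpr hmpos.le)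
      calc m'⁻¹ ≤ (1 - 1 / a)⁻¹ := h1
        _ = (1 - 1 / a)⁻¹ * 1 := (mul_one _).symm
        _ ≤ (1 - 1 / a)⁻¹ * (C₀ * m⁻¹) :=
            mul_le_mul_of_nonneg_left h2 (inv_nonneg.mpr h1a.le)
        _ = ((1 - 1 / a)⁻¹ * C₀) * m⁻¹ := (mul_assoc _ _ _).symm
        _ ≤ max 1 ((1 - 1 / a)⁻¹ * C₀) * m⁻¹ :=
            mul_le_mul_of_nonneg_right (le_max_right _ _) (inv_nonneg.mpr hmpos.le)
  refine ⟨key, ?_⟩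
  have hpow := Real.rpow_le_rpow (inv_nonneg.mpr hm'pos.le) key (by linarith : (0:ℝ) ≤ a)
  rwa [Real.mul_rpow (le_trans one_pos.le hM1) (inv_nonneg.mpr hmpos.le)] at hpow
end
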